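/- Let I be a finite nonempty set of trips with t : I → ℝ, and let R be a relation on I such that R(i,j) implies t(i) < t(j). For every natural number k with 1 ≤ k ≤ |I|: there exists a partition of I into k trip chains (nonempty sequences of distinct trips in which every consecutive pair (i,j) satisfies R(i,j)) if and only if there exists a link set E ⊆ R (a set of ordered pairs in which every trip occurs at most once as a first coordinate and at most once as a second coordinate) with |E| = |I| − k. Consequently, the minimum number of trip chains needed to partition I equals |I| minus the maximum cardinality of a link set E ⊆ R. -/

import Mathlib

/-- A partition of the trip set into `k` trip chains: each chain is a nonempty list of
distinct trips whose consecutive pairs satisfy the compatibility relation `R`, and every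
trip belongs to exactly one chain. -/
def IsChainPartition {I : Type*} (R : I → I → Prop) (k : ℕ) (ch : Fin k → List I) : Prop :=
  (∀ a : Fin k, ch a ≠ [] ∧ (ch a).Nodup ∧ (ch a).Chain' R) ∧ ∀ i : I, ∃! a : Fin k, i ∈ ch a

/-- A link set for `R`: a set of compatible ordered trip pairs in which every trip occurs at
most once as a first coordinate and at most once as a second coordinate. -/
def IsLinkSet {I : Type*} (R : I → I → Prop) (E : Finset (I × I)) : Prop :=
  (∀ p ∈ E, R p.1 p.2) ∧
  (∀ p ∈ E, ∀ q ∈ E, p.1 = q.1 → p = q) ∧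
  (∀ p ∈ E, ∀ q ∈ E, p.2 = q.2 → p = q)

open List

def adjPairs {α : Type*} (l : List α) : List (α × α) := l.zip l.tail

lemma length_adjPairs {α : Type*} (l : List α) : (adjPairs l).length = l.length - 1 := by
  simp [adjPairs, length_zip]

lemma getElem_adjPairs {α : Type*} (l : List α) (m : ℕ) (h : m < (adjPairs l).length) :
    (adjPairs l)[m] = (l[m]'(by simp [length_adjPairs] at h; omega),
      l[m+1]'(by simp [length_adjPairs] at h; omega)) := by
  have h' : m < l.length - 1 := by simpa [length_adjPairs] using h
  simp only [adjPairs, getElem_zip, getElem_tail]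

lemma mem_adjPairs_iff {α : Type*} (l : List α) (p : α × α) :
    p ∈ adjPairs l ↔ ∃ m, ∃ h : m + 1 < l.length,
      p.1 = l[m]'(by omega) ∧ p.2 = l[m+1]'h := by
  rw [List.mem_iff_getElem]
  constructor
  · rintro ⟨m, hm, rfl⟩
    have h' : m + 1 < l.length := by have := length_adjPairs l; omega
    exact ⟨m, h', by rw [getElem_adjPairs]; exact ⟨rfl, rfl⟩⟩
  · rintro ⟨m, h, h1, h2⟩
    have hm : m < (adjPairs l).length := by rw [length_adjPairs]; omega
    exact ⟨m, hm, by rw [getElem_adjPairs]; exact (Prod.ext h1.symm h2.symm)⟩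

lemma map_fst_adjPairs {α : Type*} : ∀ (l : List α), (adjPairs l).map Prod.fst = l.dropLast
  | [] => rfl
  | [x] => rfl
  | x :: y :: s => by
      have := map_fst_adjPairs (y :: s)
      simp only [adjPairs, tail_cons, zip_cons_cons, map_cons] at *
      simp [this]

lemma map_snd_adjPairs {α : Type*} (l : List α) : (adjPairs l).map Prod.snd = l.tail := by
  apply map_snd_zip
  simp [length_tail]

lemma nodup_adjPairs {α : Type*} {l : List α} (h : l.Nodup) : (adjPairs l).Nodup := by
  have : ((adjPairs l).map Prod.fst).Nodup := by
    rw [map_fst_adjPairs]; exact h.sublist (dropLast_sublist l)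
  exact this.of_map _

lemma fst_mem_of_mem_adjPairs {α : Type*} {l : List α} {p : α × α} (h : p ∈ adjPairs l) :
    p.1 ∈ l := (List.of_mem_zip h).1

lemma snd_mem_of_mem_adjPairs {α : Type*} {l : List α} {p : α × α} (h : p ∈ adjPairs l) :
    p.2 ∈ l := mem_of_mem_tail (List.of_mem_zip h).2

lemma rel_of_mem_adjPairs {α : Type*} {R : α → α → Prop} {l : List α} {p : α × α}
    (hc : l.Chain' R) (h : p ∈ adjPairs l) : R p.1 p.2 := by
  rw [mem_adjPairs_iff] at h
  obtain ⟨m, hm, h1, h2⟩ := h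
  rw [h1, h2]
  have hc := List.isChain_iff_getElem.mp hc
  simpa [List.get_eq_getElem] using hc m (by omega)

lemma eq_of_fst_eq_adjPairs {α : Type*} {l : List α} (h : l.Nodup) {p q : α × α}
    (hp : p ∈ adjPairs l) (hq : q ∈ adjPairs l) (hpq : p.1 = q.1) : p = q := by
  rw [mem_adjPairs_iff] at hp hq
  obtain ⟨m, hm, h1, h2⟩ := hp
  obtain ⟨m', hm', h1', h2'⟩ := hq
  have : m = m' := by
    have := List.Nodup.getElem_inj_iff h (i := m) (j := m') (hi := by omega) (hj := by omega)
    rw [← h1, ← h1', hpq] at this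
    exact this.mp rfl
  subst this
  exact Prod.ext (h1.trans h1'.symm) (h2.trans h2'.symm)

lemma eq_of_snd_eq_adjPairs {α : Type*} {l : List α} (h : l.Nodup) {p q : α × α}
    (hp : p ∈ adjPairs l) (hq : q ∈ adjPairs l) (hpq : p.2 = q.2) : p = q := by
  rw [mem_adjPairs_iff] at hp hq
  obtain ⟨m, hm, h1, h2⟩ := hp
  obtain ⟨m', hm', h1', h2'⟩ := hq
  have : m = m' := by
    have := List.Nodup.getElem_inj_iff h (i := m+1) (j := m'+1) (hi := hm) (hj := hm')
    rw [← h2, ← h2', hpq] at this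
    have := this.mp rfl
    omega
  subst this
  exact Prod.ext (h1.trans h1'.symm) (h2.trans h2'.symm)

lemma adjPairs_append {α : Type*} : ∀ (l₁ l₂ : List α) (h₁ : l₁ ≠ []) (h₂ : l₂ ≠ []),
    adjPairs (l₁ ++ l₂) = adjPairs l₁ ++ (l₁.getLast h₁, l₂.head h₂) :: adjPairs l₂
  | [], _, h₁, _ => absurd rfl h₁
  | [x], l₂, _, h₂ => by
      obtain ⟨y, s, rfl⟩ := exists_cons_of_ne_nil h₂
      simp [adjPairs]
  | x :: y :: s, l₂, _, h₂ => by
      have := adjPairs_append (y :: s) l₂ (by simp) h₂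
      simp only [adjPairs, cons_append, tail_cons, zip_cons_cons] at *
      rw [this]
      simp [List.getLast_cons]

lemma exists_adjPair_of_ne_getLast {α : Type*} {l : List α} {i : α} (hi : i ∈ l)
    (hne : ∀ h : l ≠ [], i ≠ l.getLast h) : ∃ x, (i, x) ∈ adjPairs l := by
  obtain ⟨m, hm, rfl⟩ := List.mem_iff_getElem.mp hi
  have hn : l ≠ [] := ne_nil_of_length_pos (by omega)
  have hlast : l.getLast hn = l[l.length - 1] := l.getLast_eq_getElem hn
  have hm1 : m + 1 < l.length := by
    rcases Nat.lt_or_ge (m+1) l.length with h | h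
    · exact h
    · exfalso; apply hne hn; rw [hlast]; congr 1; omega
  exact ⟨l[m+1], (mem_adjPairs_iff l _).mpr ⟨m, hm1, rfl, rfl⟩⟩

lemma exists_adjPair_of_ne_head {α : Type*} {l : List α} {i : α} (hi : i ∈ l)
    (hne : ∀ h : l ≠ [], i ≠ l.head h) : ∃ x, (x, i) ∈ adjPairs l := by
  obtain ⟨m, hm, rfl⟩ := List.mem_iff_getElem.mp hi
  have hn : l ≠ [] := ne_nil_of_length_pos (by omega)
  have hm0 : m ≠ 0 := by
    rintro rfl
    exact hne hn (by simp [List.head_eq_getElem])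
  obtain ⟨m', rfl⟩ : ∃ m', m = m' + 1 := ⟨m - 1, by omega⟩
  exact ⟨l[m'], (mem_adjPairs_iff l _).mpr ⟨m', hm, rfl, rfl⟩⟩


lemma isChainPartition_reindex {I : Type*} {R : I → I → Prop} {k k' : ℕ}
    {ch : Fin k → List I} (h : IsChainPartition R k ch) (e : Fin k' ≃ Fin k) :
    IsChainPartition R k' (ch ∘ e) := by
  obtain ⟨h1, h2⟩ := h
  refine ⟨fun a => h1 (e a), fun i => ?_⟩
  obtain ⟨a, ha, hu⟩ := h2 i
  exact ⟨e.symm a, by simpa using ha, fun b hb => e.injective (by simpa using hu _ hb)⟩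


lemma links_of_partition {I : Type*} [Fintype I] {R : I → I → Prop} {k : ℕ}
    {ch : Fin k → List I} (h : IsChainPartition R k ch) :
    ∃ E : Finset (I × I), IsLinkSet R E ∧ E.card + k = Fintype.card I ∧
      ∀ p ∈ E, ∃ a, p ∈ adjPairs (ch a) := by
  classical
  obtain ⟨h1, h2⟩ := h
  have hdisj : ∀ a b : Fin k, a ≠ b → ∀ i : I, i ∈ ch a → i ∈ ch b → False := by
    intro a b hab i ha hb
    obtain ⟨c, _, hu⟩ := h2 i
    exact hab ((hu a ha).trans (hu b hb).symm)
  set L : List (I × I) := (List.ofFn ch).flatMap adjPairs with hL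
  have hmemL : ∀ p : I × I, p ∈ L ↔ ∃ a, p ∈ adjPairs (ch a) := by
    intro p
    simp only [hL, List.mem_flatMap, List.mem_ofFn, Set.mem_range]
    constructor
    · rintro ⟨l, ⟨a, rfl⟩, hp⟩; exact ⟨a, hp⟩
    · rintro ⟨a, hp⟩; exact ⟨ch a, ⟨a, rfl⟩, hp⟩
  refine ⟨L.toFinset, ⟨?_, ?_, ?_⟩, ?_, ?_⟩
  · intro p hp
    obtain ⟨a, hpa⟩ := (hmemL p).mp (List.mem_toFinset.mp hp)
    exact rel_of_mem_adjPairs (h1 a).2.2 hpa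
  · intro p hp q hq hpq
    obtain ⟨a, hpa⟩ := (hmemL p).mp (List.mem_toFinset.mp hp)
    obtain ⟨b, hqb⟩ := (hmemL q).mp (List.mem_toFinset.mp hq)
    have hab : a = b := by
      by_contra hne
      exact hdisj a b hne p.1 (fst_mem_of_mem_adjPairs hpa)
        (hpq ▸ fst_mem_of_mem_adjPairs hqb)
    subst hab
    exact eq_of_fst_eq_adjPairs (h1 a).2.1 hpa hqb hpq
  · intro p hp q hq hpq
    obtain ⟨a, hpa⟩ := (hmemL p).mp (List.mem_toFinset.mp hp)
    obtain ⟨b, hqb⟩ := (hmemL q).mp (List.mem_toFinset.mp hq)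
    have hab : a = b := by
      by_contra hne
      exact hdisj a b hne p.2 (snd_mem_of_mem_adjPairs hpa)
        (hpq ▸ snd_mem_of_mem_adjPairs hqb)
    subst hab
    exact eq_of_snd_eq_adjPairs (h1 a).2.1 hpa hqb hpq
  · -- cardinality
    have hLnd : L.Nodup := by
      rw [hL, List.nodup_flatMap]
      constructor
      · rintro l hl
        rw [List.mem_ofFn] at hl
        obtain ⟨a, rfl⟩ := hl
        exact nodup_adjPairs (h1 a).2.1
      · rw [List.pairwise_ofFn]
        intro a b hab
        intro p hpa hpb
        exact hdisj a b hab.ne p.1 (fst_mem_of_mem_adjPairs hpa)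
          (fst_mem_of_mem_adjPairs hpb)
    have hcardL : L.toFinset.card = L.length := List.toFinset_card_of_nodup hLnd
    have hlenL : L.length = ∑ a : Fin k, ((ch a).length - 1) := by
      rw [hL, List.length_flatMap]
      rw [List.map_ofFn, List.sum_ofFn]
      simp [length_adjPairs]
    -- total length
    set J : List I := (List.ofFn ch).flatten with hJ
    have hJnd : J.Nodup := by
      rw [hJ, List.nodup_flatten]
      constructor
      · rintro l hl
        rw [List.mem_ofFn] at hl
        obtain ⟨a, rfl⟩ := hl
        exact (h1 a).2.1
      · rw [List.pairwise_ofFn]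
        intro a b hab i hia hib
        exact hdisj a b hab.ne i hia hib
    have hJmem : ∀ i : I, i ∈ J := by
      intro i
      obtain ⟨a, ha, _⟩ := h2 i
      rw [hJ, List.mem_flatten]
      exact ⟨ch a, List.mem_ofFn.mpr ⟨a, rfl⟩, ha⟩
    have hJlen : J.length = Fintype.card I := by
      have : J.toFinset = Finset.univ := Finset.eq_univ_iff_forall.mpr
        (fun i => List.mem_toFinset.mpr (hJmem i))
      rw [← List.toFinset_card_of_nodup hJnd, this, Finset.card_univ]
    have hJlen' : J.length = ∑ a : Fin k, (ch a).length := by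
      rw [hJ, List.length_flatten, List.map_ofFn, List.sum_ofFn]
      rfl
    have hpos : ∀ a : Fin k, 1 ≤ (ch a).length :=
      fun a => List.length_pos_iff.mpr (h1 a).1
    rw [hcardL, hlenL, ← hJlen, hJlen']
    have : ∑ a : Fin k, ((ch a).length - 1) + ∑ _a : Fin k, 1
        = ∑ a : Fin k, (ch a).length := by
      rw [← Finset.sum_add_distrib]
      exact Finset.sum_congr rfl (fun a _ => by have := hpos a; omega)
    simpa using this
  · intro p hp
    exact (hmemL p).mp (List.mem_toFinset.mp hp)

lemma head_ne_getLast_chain' {I : Type*} {t : I → ℝ} {R : I → I → Prop}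
    (hR : ∀ i j, R i j → t i < t j) {l : List I} (hc : l.Chain' R) (hn : l ≠ [])
    {i j : I} (hhead : l.head hn = j) (hlast : l.getLast hn = i) (hij : R i j) : False := by
  have hij' : t i < t j := hR _ _ hij
  by_cases heq : i = j
  · subst heq; exact lt_irrefl _ hij'
  · -- length ≥ 2
    have hc' : l.Chain' (fun x y => t x < t y) := hc.imp (fun x y h => hR _ _ h)
    have hpw : l.Pairwise (fun x y => t x < t y) := by
      have : IsTrans I (fun x y => t x < t y) := ⟨fun _ _ _ => lt_trans⟩
      exact List.isChain_iff_pairwise.mp hc'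
    have hlen : 1 ≤ l.length := List.length_pos_iff.mpr hn
    have hlen2 : 2 ≤ l.length := by
      by_contra hcon
      have hl1 : l.length = 1 := by omega
      obtain ⟨x, rfl⟩ := List.length_eq_one_iff.mp hl1
      apply heq
      simp only [List.head_cons, List.getLast_singleton] at hhead hlast
      rw [← hlast, ← hhead]
    rw [List.pairwise_iff_getElem] at hpw
    have h0 : l.head hn = l[0] := l.head_eq_getElem hn
    have hL : l.getLast hn = l[l.length - 1] := l.getLast_eq_getElem hn
    have := hpw 0 (l.length - 1) (by omega) (by omega) (by omega)
    rw [← h0, ← hL, hhead, hlast] at this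
    exact lt_asymm hij' this

lemma merge_chains {I : Type*} {R : I → I → Prop} {n : ℕ}
    {ch : Fin (n + 1) → List I} (hch : IsChainPartition R (n + 1) ch)
    {a b : Fin (n + 1)} (hab : a ≠ b) {i j : I} (hia : i ∈ ch a) (hjb : j ∈ ch b)
    (hlast : ∀ h, (ch a).getLast h = i) (hhead : ∀ h, (ch b).head h = j)
    (hRij : R i j) :
    ∃ ch' : Fin n → List I, IsChainPartition R n ch' ∧
      ∀ x p, p ∈ adjPairs (ch' x) → (∃ y, p ∈ adjPairs (ch y)) ∨ p = (i, j) := by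
  classical
  obtain ⟨h1, h2⟩ := hch
  have hdisj : ∀ c d : Fin (n+1), c ≠ d → ∀ x : I, x ∈ ch c → x ∈ ch d → False := by
    intro c d hcd x hc hd
    obtain ⟨e, _, hu⟩ := h2 x
    exact hcd ((hu c hc).trans (hu d hd).symm)
  obtain ⟨a', ha'⟩ := Fin.exists_succAbove_eq hab
  set σ : Fin n → Fin (n+1) := b.succAbove with hσ
  have hσinj : Function.Injective σ := Fin.succAbove_right_injective
  have hσne : ∀ x, σ x ≠ b := fun x => Fin.succAbove_ne b x
  refine ⟨fun x => if σ x = a then ch a ++ ch b else ch (σ x), ⟨?_, ?_⟩, ?_⟩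
  · intro x
    by_cases hx : σ x = a
    · simp only [hx, if_pos rfl]
      refine ⟨by simp [(h1 a).1], ((h1 a).2.1).append ((h1 b).2.1)
        (fun y hy hy' => hdisj a b hab y hy hy'), ?_⟩
      refine ((h1 a).2.2).append ((h1 b).2.2) ?_
      intro x₁ hx₁ y₁ hy₁
      rw [List.getLast?_eq_getLast (h1 a).1] at hx₁
      rw [List.head?_eq_head (h1 b).1] at hy₁
      obtain rfl : x₁ = i := by rw [← hlast (h1 a).1]; exact (Option.some_inj.mp hx₁).symm
      obtain rfl : y₁ = j := by rw [← hhead (h1 b).1]; exact (Option.some_inj.mp hy₁).symm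
      exact hRij
    · simp only [if_neg hx]
      exact h1 (σ x)
  · intro x₀
    obtain ⟨u, hu, huu⟩ := h2 x₀
    have hmem : ∀ y : Fin n, x₀ ∈ (if σ y = a then ch a ++ ch b else ch (σ y)) ↔
        (if σ y = a then x₀ ∈ ch a ∨ x₀ ∈ ch b else x₀ ∈ ch (σ y)) := by
      intro y
      by_cases hy : σ y = a <;> simp [hy]
    by_cases hub : u = b
    · refine ⟨a', ?_, ?_⟩
      · show x₀ ∈ (if σ a' = a then ch a ++ ch b else ch (σ a'))
        rw [if_pos ha']
        exact List.mem_append.mpr (Or.inr (hub ▸ hu))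
      · intro y hy
        rw [hmem] at hy
        by_cases hya : σ y = a
        · exact hσinj (ha' ▸ hya)
        · rw [if_neg hya] at hy
          exact absurd (huu _ hy) (by rw [hub]; exact hσne y)
    · by_cases hua : u = a
      · refine ⟨a', ?_, ?_⟩
        · show x₀ ∈ (if σ a' = a then ch a ++ ch b else ch (σ a'))
          rw [if_pos ha']
          exact List.mem_append.mpr (Or.inl (hua ▸ hu))
        · intro y hy
          rw [hmem] at hy
          by_cases hya : σ y = a
          · exact hσinj (ha' ▸ hya)
          · rw [if_neg hya] at hy
            exact absurd (huu _ hy) (by rw [hua] at *; exact hya)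
      · obtain ⟨u', hu'⟩ := Fin.exists_succAbove_eq (x := u) (y := b) hub
        refine ⟨u', ?_, ?_⟩
        · show x₀ ∈ (if σ u' = a then ch a ++ ch b else ch (σ u'))
          rw [if_neg (by show b.succAbove u' ≠ a; rw [hu']; exact hua)]
          show x₀ ∈ ch (b.succAbove u')
          rw [hu']
          exact hu
        · intro y hy
          rw [hmem] at hy
          by_cases hya : σ y = a
          · rw [if_pos hya] at hy
            rcases hy with hy | hy
            · exact absurd (huu _ hy).symm hua
            · exact absurd (huu _ hy).symm hub
          · rw [if_neg hya] at hy
            exact hσinj ((huu _ hy).trans hu'.symm)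
  · intro x p hp
    have hp : p ∈ adjPairs (if σ x = a then ch a ++ ch b else ch (σ x)) := hp
    by_cases hx : σ x = a
    · rw [if_pos hx] at hp
      rw [adjPairs_append (ch a) (ch b) (h1 a).1 (h1 b).1] at hp
      rw [hlast (h1 a).1, hhead (h1 b).1] at hp
      rcases List.mem_append.mp hp with hp | hp
      · exact Or.inl ⟨a, hp⟩
      · rcases List.mem_cons.mp hp with hp | hp
        · exact Or.inr hp
        · exact Or.inl ⟨b, hp⟩
    · rw [if_neg hx] at hp
      exact Or.inl ⟨σ x, hp⟩

lemma IsLinkSet.subset {I : Type*} {R : I → I → Prop} {E E' : Finset (I × I)}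
    (h : IsLinkSet R E) (hsub : E' ⊆ E) : IsLinkSet R E' :=
  ⟨fun p hp => h.1 p (hsub hp),
   fun p hp q hq => h.2.1 p (hsub hp) q (hsub hq),
   fun p hp q hq => h.2.2 p (hsub hp) q (hsub hq)⟩

lemma IsLinkSet.card_le {I : Type*} [Fintype I] {R : I → I → Prop} {E : Finset (I × I)}
    (h : IsLinkSet R E) : E.card ≤ Fintype.card I := by
  classical
  have : (E.image Prod.fst).card = E.card :=
    Finset.card_image_of_injOn (fun p hp q hq hpq => h.2.1 p hp q hq hpq)
  rw [← this]
  exact Finset.card_le_univ _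

lemma partition_of_linkSet {I : Type*} [Fintype I] {t : I → ℝ} {R : I → I → Prop}
    (hR : ∀ i j, R i j → t i < t j) :
    ∀ (n : ℕ) (E : Finset (I × I)), IsLinkSet R E → E.card = n →
      ∃ ch : Fin (Fintype.card I - n) → List I,
        IsChainPartition R (Fintype.card I - n) ch ∧
          ∀ x p, p ∈ adjPairs (ch x) → p ∈ E := by
  classical
  intro n
  induction n with
  | zero =>
    intro E _ hcard
    obtain rfl : E = ∅ := Finset.card_eq_zero.mp hcard
    set e := Fintype.equivFin I with he
    refine ⟨fun x => [e.symm x], ⟨?_, ?_⟩, ?_⟩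
    · intro a; simp; exact List.isChain_singleton _
    · intro i
      refine ⟨e i, by simp, fun y hy => ?_⟩
      simp only [List.mem_singleton] at hy
      rw [hy]; simp
    · intro x p hp
      simp [adjPairs] at hp
  | succ n ih =>
    intro E hE hcard
    have hne : E.Nonempty := Finset.card_pos.mp (by omega)
    obtain ⟨p₀, hp₀, hmax⟩ := Finset.exists_max_image E (fun p => t p.2) hne
    set i := p₀.1
    set j := p₀.2
    have hRij : R i j := hE.1 p₀ hp₀
    set E' := E.erase p₀ with hE'
    have hE'sub : E' ⊆ E := Finset.erase_subset _ _
    have hE'ls : IsLinkSet R E' := hE.subset hE'sub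
    have hE'card : E'.card = n := by
      rw [hE', Finset.card_erase_of_mem hp₀, hcard]
      omega
    have hle : n + 1 ≤ Fintype.card I := hcard ▸ hE.card_le
    obtain ⟨ch₀, hch₀, hlinks₀⟩ := ih E' hE'ls hE'card
    -- reindex to Fin (m + 1), m = card I - (n+1)
    set m := Fintype.card I - (n + 1) with hm
    have hmeq : m + 1 = Fintype.card I - n := by omega
    set eqv : Fin (m + 1) ≃ Fin (Fintype.card I - n) := finCongr hmeq
    set ch : Fin (m + 1) → List I := ch₀ ∘ eqv with hch
    have hchp : IsChainPartition R (m + 1) ch := isChainPartition_reindex hch₀ eqv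
    have hlinks : ∀ x p, p ∈ adjPairs (ch x) → p ∈ E' := fun x p hp => hlinks₀ (eqv x) p hp
    obtain ⟨h1, h2⟩ := hchp
    -- the chain containing i and the chain containing j
    obtain ⟨a, ha, -⟩ := h2 i
    obtain ⟨b, hb, -⟩ := h2 j
    -- i is the last element of its chain
    have hlast : ∀ h, (ch a).getLast h = i := by
      intro h
      by_contra hcon
      have : ∃ x, (i, x) ∈ adjPairs (ch a) :=
        exists_adjPair_of_ne_getLast ha (fun h' => fun he => hcon (by rw [← he]))
      obtain ⟨x, hx⟩ := this
      have hxE : (i, x) ∈ E := hE'sub (hlinks a _ hx)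
      have heq : (i, x) = p₀ := hE.2.1 _ hxE _ hp₀ rfl
      exact (Finset.mem_erase.mp (hlinks a _ hx)).1 heq
    have hhead : ∀ h, (ch b).head h = j := by
      intro h
      by_contra hcon
      have : ∃ x, (x, j) ∈ adjPairs (ch b) :=
        exists_adjPair_of_ne_head hb (fun h' => fun he => hcon (by rw [← he]))
      obtain ⟨x, hx⟩ := this
      have hxE : (x, j) ∈ E := hE'sub (hlinks b _ hx)
      have heq : (x, j) = p₀ := hE.2.2 _ hxE _ hp₀ rfl
      exact (Finset.mem_erase.mp (hlinks b _ hx)).1 heq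
    have hab : a ≠ b := by
      rintro rfl
      exact head_ne_getLast_chain' hR (h1 a).2.2 (h1 a).1 (hhead _) (hlast _) hRij
    obtain ⟨ch', hch', hlinks'⟩ :=
      merge_chains ⟨h1, h2⟩ hab ha hb hlast hhead hRij
    refine ⟨ch', hch', ?_⟩
    intro x p hp
    rcases hlinks' x p hp with ⟨y, hy⟩ | rfl
    · exact hE'sub (hlinks y p hy)
    · exact hp₀


/-- Correctness of the matching-based formulation of the minimum fleet size problem: for
`1 ≤ k ≤ |I|` a partition of the trips into `k` trip chains exists iff a link set of
cardinality `|I| - k` exists; hence the minimum fleet size equals `|I|` minus the maximum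
cardinality of a link set. -/
theorem minFleet_eq_card_sub_maxMatching {I : Type*} [Fintype I] [Nonempty I]
    (t : I → ℝ) (R : I → I → Prop) (hR : ∀ i j, R i j → t i < t j) :
    (∀ k : ℕ, 1 ≤ k → k ≤ Fintype.card I →
      ((∃ ch : Fin k → List I, IsChainPartition R k ch) ↔
        (∃ E : Finset (I × I), IsLinkSet R E ∧ E.card = Fintype.card I - k))) ∧
    sInf {k : ℕ | ∃ ch : Fin k → List I, IsChainPartition R k ch}
      = Fintype.card I - sSup {m : ℕ | ∃ E : Finset (I × I), IsLinkSet R E ∧ E.card = m} := by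
  constructor
  · intro k hk1 hk2
    constructor
    · rintro ⟨ch, hch⟩
      obtain ⟨E, hE, hcard, -⟩ := links_of_partition hch
      exact ⟨E, hE, by omega⟩
    · rintro ⟨E, hE, hcard⟩
      obtain ⟨ch, hch, -⟩ := partition_of_linkSet hR E.card E hE rfl
      have h : k = Fintype.card I - E.card := by omega
      exact ⟨ch ∘ finCongr h, isChainPartition_reindex hch (finCongr h)⟩
  · set S := {k : ℕ | ∃ ch : Fin k → List I, IsChainPartition R k ch} with hS
    set M := {m : ℕ | ∃ E : Finset (I × I), IsLinkSet R E ∧ E.card = m} with hM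
    have h0M : 0 ∈ M := ⟨∅, ⟨by simp, by simp, by simp⟩, rfl⟩
    have hMbdd : ∀ m ∈ M, m ≤ Fintype.card I := by
      rintro m ⟨E, hE, rfl⟩; exact hE.card_le
    have hMbdd' : BddAbove M := ⟨Fintype.card I, fun m hm => hMbdd m hm⟩
    have hsup_mem : sSup M ∈ M := Nat.sSup_mem ⟨0, h0M⟩ hMbdd'
    have hsup_le : sSup M ≤ Fintype.card I := hMbdd _ hsup_mem
    obtain ⟨Es, hEs, hcards⟩ := hsup_mem
    obtain ⟨chs, hchs, -⟩ := partition_of_linkSet hR Es.card Es hEs rfl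
    have hS1 : (Fintype.card I - Es.card) ∈ S := ⟨chs, hchs⟩
    rw [hcards] at hS1
    have hinf_le : sInf S ≤ Fintype.card I - sSup M := Nat.sInf_le hS1
    have hinf_mem : sInf S ∈ S := Nat.sInf_mem ⟨_, hS1⟩
    obtain ⟨ch₀, hch₀⟩ := hinf_mem
    obtain ⟨E₀, hE₀, hcard₀, -⟩ := links_of_partition hch₀
    have hM0 : E₀.card ∈ M := ⟨E₀, hE₀, rfl⟩
    have hle : E₀.card ≤ sSup M := le_csSup hMbdd' hM0
    omega
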